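/- Let p ≡ 1 (mod 4) be a prime, n = (p-1)/2, and d an integer with (d/p) = 1. Then S(d,p)/S(1,p) = ε(d) whenever S(1,p) ≠ 0, where ε(d) = 1 if d is a fourth power modulo p and ε(d) = -1 otherwise, and S(d,p) = det[((i^2+d·j^2)/p)]_{1≤i,j≤n}. -/

import Mathlib

open Equiv Equiv.Perm

lemma aux_toPerm_zpow {G : Type*} [Group G] (g : G) (k : ℤ) :
    (MulAction.toPerm g : Equiv.Perm G) ^ k = MulAction.toPerm (g ^ k) :=
  (map_zpow (MulAction.toPermHom G G) g k).symm

lemma aux_sign {G : Type*} [CommGroup G] [Fintype G] [DecidableEq G] [IsCyclic G]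
    (hG : Even (Fintype.card G)) (g : G) :
    Equiv.Perm.sign (MulAction.toPerm g : Equiv.Perm G) = 1 ↔ IsSquare g := by
  obtain ⟨h, hh⟩ := IsCyclic.exists_generator (α := G)
  have hcard2 : 2 ≤ Fintype.card G := by
    rcases hG with ⟨k, hk⟩
    have h1 : 0 < Fintype.card G := Fintype.card_pos
    omega
  have hne : h ≠ 1 := by
    intro h1
    have hall : ∀ x : G, x = 1 := by
      intro x
      obtain ⟨k, hk⟩ := hh x
      simp only [h1] at hk
      rw [← hk, one_zpow]
    have : Fintype.card G ≤ 1 :=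
      Fintype.card_le_one_iff.mpr fun a b => (hall a).trans (hall b).symm
    omega
  set φ : G →* ℤˣ := Equiv.Perm.sign.comp (MulAction.toPermHom G G) with hφ
  have hφ_apply : ∀ x : G, φ x = Equiv.Perm.sign (MulAction.toPerm x : Equiv.Perm G) :=
    fun x => rfl
  have hcyc : (MulAction.toPerm h : Equiv.Perm G).IsCycle := by
    refine ⟨1, by simpa using hne, fun y hy => ?_⟩
    obtain ⟨k, hk⟩ := hh y
    exact ⟨k, by simp only [aux_toPerm_zpow]; simpa using hk⟩
  have hsupp : (MulAction.toPerm h : Equiv.Perm G).support = Finset.univ := by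
    ext x
    simp only [Equiv.Perm.mem_support, Finset.mem_univ, iff_true,
      MulAction.toPerm_apply, smul_eq_mul]
    intro hx
    exact hne (mul_right_cancel (b := x) (by simpa using hx))
  have hsign_h : φ h = -1 := by
    rw [hφ_apply h, hcyc.sign, hsupp]
    rcases hG with ⟨k, hk⟩
    have hu : (Finset.univ : Finset G).card = Fintype.card G := rfl
    rw [hu, hk, ← two_mul]
    simp [pow_mul]
  constructor
  · intro hs
    obtain ⟨k, hk⟩ := hh g
    simp only at hk
    have hφg : φ g = (-1 : ℤˣ) ^ k := by rw [← hk, map_zpow, hsign_h]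
    rcases Int.even_or_odd k with ⟨m, hm⟩ | ⟨m, hm⟩
    · refine ⟨h ^ m, ?_⟩
      rw [← hk, hm, ← zpow_add]
    · exfalso
      have hbad : φ g = -1 := by
        rw [hφg, hm, zpow_add, zpow_one, zpow_mul,
          show ((-1:ℤˣ) ^ (2:ℤ)) = 1 by decide, one_zpow, one_mul]
      rw [hφ_apply g, hs] at hbad
      exact absurd hbad (by decide)
  · rintro ⟨x, rfl⟩
    rw [← hφ_apply (x * x), map_mul]
    rcases Int.units_eq_one_or (φ x) with h1 | h1 <;> rw [h1] <;> decide

lemma leg_congr (p : ℕ) [Fact p.Prime] {a b : ℤ} (h : (a : ZMod p) = (b : ZMod p)) :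
    legendreSym p a = legendreSym p b := by
  unfold legendreSym; rw [h]

theorem stmt18 (p : ℕ) [Fact p.Prime] (hp4 : p % 4 = 1) (d : ℤ)
    (hd : legendreSym p d = 1)
    (hS : (Matrix.of fun i j : Fin ((p - 1) / 2) =>
        legendreSym p (((i : ℤ) + 1) ^ 2 + ((j : ℤ) + 1) ^ 2)).det ≠ 0) :
    (((Matrix.of fun i j : Fin ((p - 1) / 2) =>
        legendreSym p (((i : ℤ) + 1) ^ 2 + d * ((j : ℤ) + 1) ^ 2)).det : ℤ) : ℚ) /
      (((Matrix.of fun i j : Fin ((p - 1) / 2) =>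
        legendreSym p (((i : ℤ) + 1) ^ 2 + ((j : ℤ) + 1) ^ 2)).det : ℤ) : ℚ) =
    if ∃ y : ZMod p, y ^ 4 = (d : ZMod p) then 1 else -1 := by
  have hp : p.Prime := Fact.out
  have hp2 : 2 ≤ p := hp.two_le
  have hp5 : 5 ≤ p := by
    rcases Nat.lt_or_ge p 5 with h | h
    · interval_cases p <;> simp_all <;> omega
    · exact h
  set n := (p - 1) / 2 with hn
  have h2n : 2 * n = p - 1 := by omega
  have hneven : Even n := by
    refine ⟨(p - 1) / 4, by omega⟩
  -- d is a nonzero square mod p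
  have hd0 : (d : ZMod p) ≠ 0 := by
    intro h
    rw [(legendreSym.eq_zero_iff p d).mpr h] at hd
    exact absurd hd (by norm_num)
  obtain ⟨c0, hc0⟩ : IsSquare ((d : ZMod p)) := (legendreSym.eq_one_iff p hd0).mp hd
  have hc0ne : c0 ≠ 0 := by
    intro h; rw [h, mul_zero] at hc0; exact hd0 hc0
  set c : (ZMod p)ˣ := (isUnit_iff_ne_zero.mpr hc0ne).unit with hc
  have hcval : (c : ZMod p) = c0 := IsUnit.unit_spec _
  -- the quotient group
  set H : Subgroup (ZMod p)ˣ := Subgroup.zpowers (-1 : (ZMod p)ˣ) with hH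
  have hmemH : ∀ x : (ZMod p)ˣ, x ∈ H ↔ x = 1 ∨ x = -1 := by
    intro x
    rw [hH, Subgroup.mem_zpowers_iff]
    constructor
    · rintro ⟨k, rfl⟩
      rcases Int.even_or_odd k with ⟨m, hm⟩ | ⟨m, hm⟩
      · left
        rw [hm, ← two_mul, zpow_mul, show ((-1 : (ZMod p)ˣ) ^ (2:ℤ)) = 1 by
          rw [zpow_two]; ext; simp, one_zpow]
      · right
        rw [hm, zpow_add, zpow_one, zpow_mul, show ((-1 : (ZMod p)ˣ) ^ (2:ℤ)) = 1 by
          rw [zpow_two]; ext; simp, one_zpow, one_mul]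
    · rintro (rfl | rfl)
      · exact ⟨0, zpow_zero _⟩
      · exact ⟨1, zpow_one _⟩
  letI : Fintype ((ZMod p)ˣ ⧸ H) := Fintype.ofFinite _
  letI : DecidableEq ((ZMod p)ˣ ⧸ H) := Classical.decEq _
  haveI : IsCyclic ((ZMod p)ˣ ⧸ H) :=
    isCyclic_of_surjective (QuotientGroup.mk' H) (QuotientGroup.mk'_surjective H)
  have hne11 : (-1 : (ZMod p)ˣ) ≠ 1 := by
    intro h
    have : (-1 : ZMod p) = 1 := by
      have := congrArg (Units.val) h; simpa using this
    have h2 : ((2 : ℕ) : ZMod p) = 0 := by push_cast; linear_combination -this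
    rw [ZMod.natCast_eq_zero_iff] at h2
    have := Nat.le_of_dvd two_pos h2
    omega
  have hcardH : Nat.card H = 2 := by
    rw [hH, Nat.card_zpowers]
    exact orderOf_eq_prime (by rw [sq]; ext; simp) hne11
  have hcardQ : Fintype.card ((ZMod p)ˣ ⧸ H) = n := by
    have h1 := Subgroup.card_eq_card_quotient_mul_card_subgroup H
    rw [hcardH, Nat.card_eq_fintype_card, Nat.card_eq_fintype_card, ZMod.card_units p] at h1
    rw [← Nat.card_eq_fintype_card] at h1 ⊢
    omega
  -- the indexing map
  have hap : ∀ j : Fin n, (((j : ℕ) + 1 : ℕ) : ZMod p) ≠ 0 := by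
    intro j h
    rw [ZMod.natCast_eq_zero_iff] at h
    have := j.isLt
    have := Nat.le_of_dvd (by omega) h
    omega
  set m : Fin n → (ZMod p)ˣ := fun j =>
    (isUnit_iff_ne_zero.mpr (hap j)).unit with hm
  have hmval : ∀ j, (m j : ZMod p) = (((j : ℕ) + 1 : ℕ) : ZMod p) :=
    fun j => IsUnit.unit_spec _
  set e : Fin n → (ZMod p)ˣ ⧸ H := fun j => QuotientGroup.mk (m j) with he
  have hinj : Function.Injective e := by
    intro i j hij
    rw [he] at hij
    simp only at hij
    rw [QuotientGroup.eq, hmemH] at hij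
    have hi := i.isLt; have hj := j.isLt
    rcases hij with h1 | h1
    · have hmm : m i = m j := by
        rwa [inv_mul_eq_one] at h1
      have hval : (((i : ℕ) + 1 : ℕ) : ZMod p) = (((j : ℕ) + 1 : ℕ) : ZMod p) := by
        rw [← hmval i, ← hmval j, hmm]
      have := congrArg ZMod.val hval
      rw [ZMod.val_cast_of_lt (by omega), ZMod.val_cast_of_lt (by omega)] at this
      exact Fin.ext (by omega)
    · exfalso
      have hmm : m j = -(m i) := by
        have h2 : m i * ((m i)⁻¹ * m j) = m i * (-1) := by rw [h1]
        rwa [← mul_assoc, mul_inv_cancel, one_mul, mul_neg_one] at h2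
      have hval : (((j : ℕ) + 1 : ℕ) : ZMod p) = -((((i : ℕ) + 1 : ℕ)) : ZMod p) := by
        rw [← hmval i, ← hmval j, hmm]; simp
      have hz : ((((i : ℕ) + 1) + ((j : ℕ) + 1) : ℕ) : ZMod p) = 0 := by
        push_cast
        push_cast at hval
        linear_combination hval
      rw [ZMod.natCast_eq_zero_iff] at hz
      have := Nat.le_of_dvd (by omega) hz
      omega
  have hbij : Function.Bijective e :=
    (Fintype.bijective_iff_injective_and_card e).mpr
      ⟨hinj, by rw [Fintype.card_fin, hcardQ]⟩
  set eb : Fin n ≃ ((ZMod p)ˣ ⧸ H) := Equiv.ofBijective e hbij with heb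
  set cQ : (ZMod p)ˣ ⧸ H := QuotientGroup.mk c with hcQ
  set τ : Equiv.Perm ((ZMod p)ˣ ⧸ H) := MulAction.toPerm cQ with hτ
  set σ : Equiv.Perm (Fin n) := Equiv.permCongr eb.symm τ with hσdef
  have hebe : ∀ j, eb j = e j := fun j => rfl
  have hσ : ∀ j, (QuotientGroup.mk (m (σ j)) : (ZMod p)ˣ ⧸ H)
      = QuotientGroup.mk (c * m j) := by
    intro j
    have h1 : eb (σ j) = τ (eb j) := by
      rw [hσdef]
      simp [Equiv.permCongr_apply]
    rw [hebe, hebe] at h1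
    rw [he] at h1
    simp only at h1
    rw [h1, hτ]
    simp [MulAction.toPerm_apply, smul_eq_mul, hcQ, QuotientGroup.mk_mul]
  -- key square identity
  have hkey : ∀ j : Fin n, (d : ZMod p) * ((((j : ℕ) + 1 : ℕ) : ZMod p)) ^ 2
      = ((((σ j : Fin n) : ℕ) + 1 : ℕ) : ZMod p) ^ 2 := by
    intro j
    have h1 := hσ j
    rw [QuotientGroup.eq, hmemH] at h1
    have h2 : (c * m j) = m (σ j) ∨ (c * m j) = -(m (σ j)) := by
      rcases h1 with h1 | h1
      · left
        exact (inv_mul_eq_one.mp h1).symm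
      · right
        have h2 : m (σ j) * ((m (σ j))⁻¹ * (c * m j)) = m (σ j) * (-1) := by rw [h1]
        rwa [← mul_assoc, mul_inv_cancel, one_mul, mul_neg_one] at h2
    have hsq : (c * m j) ^ 2 = (m (σ j)) ^ 2 := by
      rcases h2 with h2 | h2 <;> rw [h2]
      rw [neg_sq]
    have := congrArg (Units.val) hsq
    push_cast at this
    rw [mul_pow] at this
    rw [hmval, hmval] at this
    rw [hcval] at this
    rw [← this, hc0]
    ring
  -- matrix identity
  have hMd : (Matrix.of fun i j : Fin n =>
        legendreSym p (((i : ℤ) + 1) ^ 2 + d * ((j : ℤ) + 1) ^ 2))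
      = (Matrix.of fun i j : Fin n =>
        legendreSym p (((i : ℤ) + 1) ^ 2 + ((j : ℤ) + 1) ^ 2)).submatrix id σ := by
    ext i j
    simp only [Matrix.submatrix_apply, Matrix.of_apply, id]
    apply leg_congr
    have := hkey j
    push_cast at this ⊢
    linear_combination this
  have hdet : (Matrix.of fun i j : Fin n =>
        legendreSym p (((i : ℤ) + 1) ^ 2 + d * ((j : ℤ) + 1) ^ 2)).det
      = (Equiv.Perm.sign σ : ℤ) * (Matrix.of fun i j : Fin n =>
        legendreSym p (((i : ℤ) + 1) ^ 2 + ((j : ℤ) + 1) ^ 2)).det := by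
    rw [hMd, Matrix.det_permute']
    norm_cast
  have hsign : Equiv.Perm.sign σ = Equiv.Perm.sign τ :=
    Equiv.Perm.sign_permCongr eb.symm τ
  have hmkneg : (QuotientGroup.mk (-1 : (ZMod p)ˣ) : (ZMod p)ˣ ⧸ H) = 1 :=
    (QuotientGroup.eq_one_iff _).mpr ((hmemH _).mpr (Or.inr rfl))
  have hiff : (∃ y : ZMod p, y ^ 4 = (d : ZMod p)) ↔ IsSquare cQ := by
    constructor
    · rintro ⟨y, hy⟩
      have hyne : y ≠ 0 := by
        intro h; rw [h] at hy; exact hd0 (by rw [← hy]; norm_num)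
      set u : (ZMod p)ˣ := (isUnit_iff_ne_zero.mpr hyne).unit with hu
      have huval : (u : ZMod p) = y := IsUnit.unit_spec _
      have hu4 : ((u ^ 2) ^ 2 : (ZMod p)ˣ) = c ^ 2 := by
        apply Units.ext
        push_cast
        rw [huval, hcval, ← pow_mul]
        rw [show (2 * 2 = 4) from rfl, hy, hc0]
        ring
      set w : (ZMod p)ˣ := u ^ 2 * c⁻¹ with hw
      have hw2 : w ^ 2 = 1 := by
        rw [hw, mul_pow, hu4, inv_pow, mul_inv_cancel]
      have hw1 : w = 1 ∨ w = -1 := by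
        have := congrArg (Units.val) hw2
        push_cast at this
        rw [sq] at this
        rcases mul_self_eq_one_iff.mp this with h | h
        · left; exact Units.ext h
        · right; apply Units.ext; rw [h]; simp
      have hcsq : (QuotientGroup.mk c : (ZMod p)ˣ ⧸ H)
          = QuotientGroup.mk (u ^ 2) := by
        rcases hw1 with h | h
        · have : u ^ 2 = c := by
            have h2 := congrArg (fun z => z * c) h
            simp only [one_mul] at h2
            rwa [hw, mul_assoc, inv_mul_cancel, mul_one] at h2
          rw [this]
        · have : u ^ 2 = -c := by
            have h2 := congrArg (fun z => z * c) h
            rw [hw, mul_assoc, inv_mul_cancel, mul_one, neg_one_mul] at h2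
            exact h2
          rw [this, show (-c : (ZMod p)ˣ) = -1 * c by rw [neg_one_mul],
            QuotientGroup.mk_mul, hmkneg]
          exact (one_mul (QuotientGroup.mk c : (ZMod p)ˣ ⧸ H)).symm
      exact ⟨QuotientGroup.mk u, by
        rw [hcQ, hcsq, ← QuotientGroup.mk_mul, sq]⟩
    · rintro ⟨q, hq⟩
      obtain ⟨u, rfl⟩ := QuotientGroup.mk_surjective q
      have h1 : (QuotientGroup.mk c : (ZMod p)ˣ ⧸ H) = QuotientGroup.mk (u * u) := by
        rw [QuotientGroup.mk_mul]
        exact hq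
      rw [QuotientGroup.eq, hmemH] at h1
      have h2 : u * u = c ∨ u * u = -c := by
        rcases h1 with h | h
        · left; exact (inv_mul_eq_one.mp h).symm
        · right
          have h2 : c * (c⁻¹ * (u * u)) = c * (-1) := by rw [h]
          rwa [← mul_assoc, mul_inv_cancel, one_mul, mul_neg_one] at h2
      refine ⟨(u : ZMod p), ?_⟩
      have h3 : (u * u) ^ 2 = c ^ 2 := by
        rcases h2 with h | h <;> rw [h]
        rw [neg_sq]
      have := congrArg (Units.val) h3
      push_cast at this
      rw [hcval] at this
      rw [hc0]
      linear_combination this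
  have haux := aux_sign (G := (ZMod p)ˣ ⧸ H) (by rw [hcardQ]; exact hneven) cQ
  have hDne : ((((Matrix.of fun i j : Fin n =>
      legendreSym p (((i : ℤ) + 1) ^ 2 + ((j : ℤ) + 1) ^ 2)).det : ℤ) : ℚ)) ≠ 0 :=
    Int.cast_ne_zero.mpr hS
  by_cases hy : ∃ y : ZMod p, y ^ 4 = (d : ZMod p)
  · rw [if_pos hy]
    have h1 : Equiv.Perm.sign τ = 1 := haux.mpr (hiff.mp hy)
    rw [hdet, hsign, h1]
    push_cast
    rw [one_mul, div_self (by rwa [Int.cast_det] at hDne)]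
  · rw [if_neg hy]
    have h1 : Equiv.Perm.sign τ = -1 := by
      rcases Int.units_eq_one_or (Equiv.Perm.sign τ) with h | h
      · exact absurd (hiff.mpr (haux.mp h)) hy
      · exact h
    rw [hdet, hsign, h1]
    push_cast
    rw [neg_one_mul, neg_div, div_self (by rwa [Int.cast_det] at hDne)]
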